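/- Explicit evaluation of the (1,M)-fused diagonal weight: for a nonnegative integer vector A = (A₁,...,A_N) with |A| ≤ M, a color a with 1 ≤ a ≤ N, and parameters q, z, the quantity W = Σ_{P ∈ {e₀, e_a}} Φ(C - P, C + e_a - P; q^{1-M}z, q^{-M}z) Φ(P, e_a; q^{-1}/z, q^{-1}) · q^{|A| - M} with C = A satisfies W = ((1 - q^{A_a}/z)/(1 - q^M/z)) · q^{A_{a+1} + ... + A_N}. (Here the two summands correspond to P = e₀, where the first factor uses zero vector for P, interpreted appropriately, and P = e_a.) -/
import Mathlib


/-- Finite q-Pochhammer symbol `(x;q)_n = ∏_{i=0}^{n-1} (1 - x qⁱ)`. -/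
noncomputable def qPoch (q x : ℝ) (n : ℕ) : ℝ :=
  ∏ i ∈ Finset.range n, (1 - x * q ^ i)

/-- Gaussian (q-)binomial coefficient. -/
noncomputable def qBinom (q : ℝ) (a b : ℕ) : ℝ :=
  if b ≤ a then qPoch q q a / (qPoch q q b * qPoch q q (a - b)) else 0

/-- The function
`Φ(λ,μ;x,y) = q^{φ(μ-λ,λ)} (y/x)^{|λ|} ((x;q)_{|λ|}(y/x;q)_{|μ|-|λ|})/(y;q)_{|μ|} ∏ᵢ binom_q(μᵢ,λᵢ)`
with `φ(α,β) = Σ_{i<j} αᵢ βⱼ`. -/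
noncomputable def Phi {N : ℕ} (q x y : ℝ) (lam mu : Fin N → ℕ) : ℝ :=
  q ^ (∑ i : Fin N, ∑ j : Fin N, if i < j then (mu i - lam i) * lam j else 0) *
    (y / x) ^ (∑ i, lam i) *
    (qPoch q x (∑ i, lam i) * qPoch q (y / x) (∑ i, (mu i - lam i))) /
    qPoch q y (∑ i, mu i) *
    ∏ i, qBinom q (mu i) (lam i)

set_option maxHeartbeats 1000000

lemma qPoch_zero (q x : ℝ) : qPoch q x 0 = 1 := by simp [qPoch]

lemma qPoch_one (q x : ℝ) : qPoch q x 1 = 1 - x := by simp [qPoch]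

lemma qPoch_succ (q x : ℝ) (n : ℕ) : qPoch q x (n+1) = qPoch q x n * (1 - x * q ^ n) := by
  simp [qPoch, Finset.prod_range_succ]

lemma qPoch_shift (q x : ℝ) (n : ℕ) : qPoch q x (n+1) = (1 - x) * qPoch q (q*x) n := by
  rw [qPoch, Finset.prod_range_succ']
  simp only [pow_zero, mul_one]
  rw [mul_comm]
  congr 1
  rw [qPoch]
  apply Finset.prod_congr rfl
  intro i _
  ring

lemma qPoch_ne_zero_of_le {q x : ℝ} {m n : ℕ} (h : m ≤ n) (hn : qPoch q x n ≠ 0) :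
    qPoch q x m ≠ 0 := by
  obtain ⟨k, rfl⟩ := Nat.exists_eq_add_of_le h
  rw [qPoch, Finset.prod_range_add] at hn
  exact fun h0 => hn (by rw [qPoch] at h0; rw [h0, zero_mul])

lemma qPoch_q_ne_zero {q : ℝ} (hroot : ∀ n : ℕ, n ≠ 0 → q ^ n ≠ 1) (n : ℕ) :
    qPoch q q n ≠ 0 := by
  rw [qPoch]
  apply Finset.prod_ne_zero_iff.2
  intro i _
  have := hroot (i+1) (Nat.succ_ne_zero i)
  rw [pow_succ'] at this
  intro h0
  apply this
  linarith [sub_eq_zero.mp h0]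

lemma qBinom_self {q : ℝ} (hroot : ∀ n : ℕ, n ≠ 0 → q ^ n ≠ 1) (n : ℕ) :
    qBinom q n n = 1 := by
  rw [qBinom, if_pos le_rfl, Nat.sub_self, qPoch_zero, mul_one,
    div_self (qPoch_q_ne_zero hroot n)]

lemma qBinom_zero {q : ℝ} (hroot : ∀ n : ℕ, n ≠ 0 → q ^ n ≠ 1) (n : ℕ) :
    qBinom q n 0 = 1 := by
  rw [qBinom, if_pos (Nat.zero_le n), qPoch_zero, Nat.sub_zero, one_mul,
    div_self (qPoch_q_ne_zero hroot n)]

lemma one_sub_q_ne {q : ℝ} (hroot : ∀ n : ℕ, n ≠ 0 → q ^ n ≠ 1) : (1:ℝ) - q ≠ 0 := by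
  have := hroot 1 one_ne_zero
  simp only [pow_one] at this
  intro h; exact this (by linarith [sub_eq_zero.mp h])

lemma qBinom_succ_self {q : ℝ} (hroot : ∀ n : ℕ, n ≠ 0 → q ^ n ≠ 1) (n : ℕ) :
    qBinom q (n+1) n = (1 - q^(n+1)) / (1 - q) := by
  rw [qBinom, if_pos (Nat.le_succ n), show n+1-n = 1 from by omega, qPoch_one, qPoch_succ]
  have hp := qPoch_q_ne_zero hroot n
  have h1 := one_sub_q_ne hroot
  field_simp
  ring

lemma qBinom_pred_self {q : ℝ} (hroot : ∀ n : ℕ, n ≠ 0 → q ^ n ≠ 1) (n : ℕ) (hn : 1 ≤ n) :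
    qBinom q n (n-1) = (1 - q^n) / (1 - q) := by
  obtain ⟨m, rfl⟩ := Nat.exists_eq_add_of_le hn
  have h1 : 1 + m = m + 1 := by omega
  rw [h1]
  simpa using qBinom_succ_self hroot m

lemma key (q z u v w t P : ℝ) (hq : q ≠ 0) (hz : z ≠ 0) (hu : u ≠ 0) (hv : v ≠ 0)
    (h1q : 1 - q ≠ 0) (h1qi : 1 - q⁻¹ ≠ 0) (hP : P ≠ 0)
    (hfac : 1 - q * (v⁻¹ * z) * u ≠ 0) (h1y : 1 - v⁻¹ * z ≠ 0) (hden2 : 1 - v / z ≠ 0) :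
    (t * (u * q)⁻¹ * (P * (1 - q * (v⁻¹ * z) * u) * (1 - q⁻¹)) /
        ((1 - v⁻¹ * z) * (P * (1 - q * (v⁻¹ * z) * u))) * ((1 - w * q) / (1 - q)) *
        ((1 - z) / (1 - q⁻¹))
      + t * u⁻¹ * (P * (1 - q⁻¹)) / ((1 - v⁻¹ * z) * P) * ((1 - w) / (1 - q)) *
        (z * (1 - q⁻¹ / z) / (1 - q⁻¹))) * (u * q * v⁻¹)
      = (1 - w / z) / (1 - v / z) * t := by
  have e1 : P * (1 - q * (v⁻¹ * z) * u) ≠ 0 := mul_ne_zero hP hfac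
  rw [mul_div_assoc (t * (u * q)⁻¹), mul_comm (1 - v⁻¹ * z) (P * (1 - q * (v⁻¹ * z) * u)),
    ← div_div, mul_comm (P * (1 - q * (v⁻¹ * z) * u)) (1 - q⁻¹), mul_div_assoc (1 - q⁻¹),
    div_self e1, mul_one]
  rw [mul_div_assoc (t * u⁻¹), mul_comm (1 - v⁻¹ * z) P, ← div_div,
    mul_comm P (1 - q⁻¹), mul_div_assoc (1 - q⁻¹), div_self hP, mul_one]
  have hvz : v⁻¹ * z ≠ 0 := mul_ne_zero (inv_ne_zero hv) hz
  have hq1 : q - 1 ≠ 0 := fun h => h1q (by linarith)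
  have hzmv : z - v ≠ 0 := by
    intro h
    apply hden2
    rw [show v = z from by linarith, div_self hz]
    ring
  have hvmz : v - z ≠ 0 := fun h => hzmv (by linarith)
  have e2 : 1 - q⁻¹ = (q-1)/q := by field_simp
  have e3 : 1 - v⁻¹*z = (v-z)/v := by field_simp
  have e4 : (1:ℝ) - q⁻¹/z = (q*z-1)/(q*z) := by field_simp
  rw [e2, e3, e4]
  field_simp
  ring

lemma phi_sum {N : ℕ} (a : Fin N) (lam : Fin N → ℕ) :
    (∑ i : Fin N, ∑ j : Fin N, if i < j then (if i = a then 1 else 0) * lam j else 0)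
      = ∑ j ∈ Finset.univ.filter (fun j => a < j), lam j := by
  rw [Finset.sum_eq_single_of_mem a (Finset.mem_univ a)]
  · rw [Finset.sum_filter]
    apply Finset.sum_congr rfl
    intro j _
    simp
  · intro b _ hb
    apply Finset.sum_eq_zero
    intro j _
    simp [hb]


/-- Explicit evaluation of the `(1,M)`-fused diagonal weight: with `C = A`,
`Σ_{P ∈ {e₀,e_a}} Φ(C-P, C+e_a-P; q^{1-M}z, q^{-M}z) Φ(P, e_a; q^{-1}/z, q^{-1}) · q^{|A|-M}
  = ((1 - q^{A_a}/z)/(1 - q^M/z)) q^{A_{a+1}+...+A_N}`. -/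
theorem fused_diagonal_weight {N : ℕ} (q z : ℝ) (M : ℕ) (A : Fin N → ℕ) (a : Fin N)
    (hq : 0 < q) (hroot : ∀ n : ℕ, n ≠ 0 → q ^ n ≠ 1) (hz : z ≠ 0)
    (hAa : 1 ≤ A a) (hAM : ∑ i, A i ≤ M)
    (hden : qPoch q (q ^ (-(M : ℤ)) * z) (∑ i, A i + 1) ≠ 0)
    (hden2 : (1 : ℝ) - q ^ M / z ≠ 0) :
    (Phi q (q ^ ((1 : ℤ) - (M : ℤ)) * z) (q ^ (-(M : ℤ)) * z)
        A (fun i => A i + (if i = a then 1 else 0)) *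
      Phi q (q ^ (-1 : ℤ) / z) (q ^ (-1 : ℤ))
        (fun _ => 0) (fun i => if i = a then 1 else 0)
      +
      Phi q (q ^ ((1 : ℤ) - (M : ℤ)) * z) (q ^ (-(M : ℤ)) * z)
        (fun i => A i - (if i = a then 1 else 0)) A *
      Phi q (q ^ (-1 : ℤ) / z) (q ^ (-1 : ℤ))
        (fun i => if i = a then 1 else 0) (fun i => if i = a then 1 else 0)) *
      q ^ (((∑ i, A i : ℕ) : ℤ) - (M : ℤ))
      = (1 - q ^ (A a) / z) / (1 - q ^ M / z) *
          q ^ (∑ i ∈ Finset.univ.filter (fun i => a < i), A i) := by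
  have hq0 : q ≠ 0 := ne_of_gt hq
  set S : ℕ := ∑ i, A i with hSdef
  set T : ℕ := ∑ i ∈ Finset.univ.filter (fun i => a < i), A i with hTdef
  set y1 : ℝ := q ^ (-(M : ℤ)) * z with hy1def
  set x1 : ℝ := q ^ ((1 : ℤ) - (M : ℤ)) * z with hx1def
  have hy1ne : y1 ≠ 0 := mul_ne_zero (zpow_ne_zero _ hq0) hz
  have hx1y1 : x1 = q * y1 := by
    rw [hx1def, hy1def, sub_eq_add_neg, zpow_add₀ hq0, zpow_one]
    ring
  have hx1ne : x1 ≠ 0 := by rw [hx1y1]; exact mul_ne_zero hq0 hy1ne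
  have hyx1 : y1 / x1 = q⁻¹ := by
    rw [hx1y1, mul_comm q y1, ← div_div, div_self hy1ne, one_div]
  have hqinv : (q:ℝ) ^ (-1:ℤ) = q⁻¹ := by simp [zpow_neg]
  have hyx2 : (q:ℝ) ^ (-1:ℤ) / (q ^ (-1:ℤ) / z) = z := by
    rw [hqinv]
    rw [div_div_eq_mul_div, mul_comm, mul_div_assoc, div_self (inv_ne_zero hq0), mul_one]
  -- component sums
  have hSe : (∑ i : Fin N, if i = a then (1:ℕ) else 0) = 1 := by simp
  have hsum1 : (∑ i : Fin N, (A i + if i = a then 1 else 0)) = S + 1 := by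
    rw [Finset.sum_add_distrib, hSe]
  have hsub1 : ∀ i : Fin N, A i + (if i = a then 1 else 0) - A i = (if i = a then 1 else 0) :=
    fun i => by omega
  have hsub2 : ∀ i : Fin N, A i - (A i - if i = a then 1 else 0) = (if i = a then 1 else 0) := by
    intro i
    by_cases h : i = a
    · subst h; simp; omega
    · simp [h]
  have hle : ∀ i : Fin N, (if i = a then 1 else 0) ≤ A i := by
    intro i; by_cases h : i = a
    · subst h; simpa using hAa
    · simp [h]
  have hS1sum : (∑ i : Fin N, (A i - if i = a then 1 else 0)) = S - 1 := by
    rw [Finset.sum_tsub_distrib _ (fun i _ => hle i), hSe]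
  have hSpos : 1 ≤ S := le_trans hAa (Finset.single_le_sum (f := A) (fun i _ => Nat.zero_le _)
    (Finset.mem_univ a))
  have hSS1 : S - 1 + 1 = S := by omega
  -- phi exponents
  have hphi1 : (∑ i : Fin N, ∑ j : Fin N,
      if i < j then (A i + (if i = a then 1 else 0) - A i) * A j else 0) = T := by
    simp only [hsub1]; exact phi_sum a A
  have hphi2 : (∑ i : Fin N, ∑ j : Fin N,
      if i < j then (A i - (A i - if i = a then 1 else 0)) * (A j - if j = a then 1 else 0)
        else 0) = T := by
    simp only [hsub2]
    rw [phi_sum a (fun j => A j - if j = a then 1 else 0), hTdef]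
    apply Finset.sum_congr rfl
    intro j hj
    have hja : a < j := (Finset.mem_filter.mp hj).2
    rw [if_neg (ne_of_gt hja), Nat.sub_zero]
  -- binomial products
  have hprod1 : (∏ i : Fin N, qBinom q (A i + if i = a then 1 else 0) (A i))
      = (1 - q ^ (A a + 1)) / (1 - q) := by
    rw [Finset.prod_eq_single_of_mem a (Finset.mem_univ a)]
    · rw [if_pos rfl]; exact qBinom_succ_self hroot (A a)
    · intro b _ hb
      rw [if_neg hb, Nat.add_zero]
      exact qBinom_self hroot (A b)
  have hprod2 : (∏ i : Fin N, qBinom q (A i) (A i - if i = a then 1 else 0))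
      = (1 - q ^ (A a)) / (1 - q) := by
    rw [Finset.prod_eq_single_of_mem a (Finset.mem_univ a)]
    · rw [if_pos rfl]; exact qBinom_pred_self hroot (A a) hAa
    · intro b _ hb
      rw [if_neg hb, Nat.sub_zero]
      exact qBinom_self hroot (A b)
  have hprod3 : (∏ i : Fin N, qBinom q (if i = a then 1 else 0) 0) = 1 := by
    apply Finset.prod_eq_one
    intro i _
    exact qBinom_zero hroot _
  have hprod4 : (∏ i : Fin N, qBinom q (if i = a then 1 else 0) (if i = a then 1 else 0)) = 1 := by
    apply Finset.prod_eq_one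
    intro i _
    exact qBinom_self hroot _
  -- evaluate the four Phi's
  have hPhi1 : Phi q x1 y1 A (fun i => A i + (if i = a then 1 else 0))
      = q ^ T * (q⁻¹) ^ S * (qPoch q x1 S * (1 - q⁻¹)) / qPoch q y1 (S+1) *
          ((1 - q ^ (A a + 1)) / (1 - q)) := by
    simp only [Phi]
    rw [hphi1, hyx1, hprod1, ← hSdef]
    simp only [hsub1, hSe, hsum1, qPoch_one]
  have hPhi2 : Phi q (q ^ (-1:ℤ) / z) (q ^ (-1:ℤ)) (fun _ => 0)
        (fun i => if i = a then 1 else 0)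
      = (1 - z) / (1 - q⁻¹) := by
    simp only [Phi]
    rw [hyx2, hprod3]
    simp only [Nat.sub_zero, hSe, Finset.sum_const_zero, pow_zero, qPoch_zero, qPoch_one,
      hqinv, ite_self, mul_zero]
    ring
  have hPhi3 : Phi q x1 y1 (fun i => A i - (if i = a then 1 else 0)) A
      = q ^ T * (q⁻¹) ^ (S-1) * (qPoch q x1 (S-1) * (1 - q⁻¹)) / qPoch q y1 S *
          ((1 - q ^ (A a)) / (1 - q)) := by
    simp only [Phi]
    rw [hphi2, hyx1, hprod2, ← hSdef]
    simp only [hsub2, hSe, hS1sum, qPoch_one]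
  have hPhi4 : Phi q (q ^ (-1:ℤ) / z) (q ^ (-1:ℤ))
        (fun i => if i = a then 1 else 0) (fun i => if i = a then 1 else 0)
      = z * (1 - q⁻¹ / z) / (1 - q⁻¹) := by
    simp only [Phi]
    rw [hyx2, hprod4]
    simp only [Nat.sub_self, hSe, Finset.sum_const_zero, pow_zero, pow_one, qPoch_zero,
      qPoch_one, hqinv, ite_self, mul_zero, zero_mul]
    ring
  rw [hPhi1, hPhi2, hPhi3, hPhi4]
  -- qPoch relations
  have hshiftS : qPoch q y1 (S+1) = (1 - y1) * qPoch q x1 S := by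
    rw [qPoch_shift, ← hx1y1]
  have hshiftS1 : qPoch q y1 S = (1 - y1) * qPoch q x1 (S-1) := by
    conv_lhs => rw [← hSS1]
    rw [qPoch_shift, ← hx1y1]
  have hdenS : qPoch q y1 (S+1) ≠ 0 := hden
  rw [hshiftS] at hdenS
  have h1y : (1:ℝ) - y1 ≠ 0 := fun h => hdenS (by rw [h, zero_mul])
  have hPS : qPoch q x1 S ≠ 0 := fun h => hdenS (by rw [h, mul_zero])
  have hPS1 : qPoch q x1 (S-1) ≠ 0 := qPoch_ne_zero_of_le (Nat.sub_le S 1) hPS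
  have hsplit : qPoch q x1 S = qPoch q x1 (S-1) * (1 - x1 * q ^ (S-1)) := by
    conv_lhs => rw [← hSS1]
    rw [qPoch_succ]
  have hfac : (1:ℝ) - x1 * q ^ (S-1) ≠ 0 := by
    rw [hsplit] at hPS
    exact fun h => hPS (by rw [h, mul_zero])
  have h1q : (1:ℝ) - q ≠ 0 := one_sub_q_ne hroot
  have h1qi : (1:ℝ) - q⁻¹ ≠ 0 := by
    have h : (1:ℝ) - q⁻¹ = (q - 1) / q := by field_simp
    rw [h]
    exact div_ne_zero (fun h0 => h1q (by linarith [sub_eq_zero.mp h0])) hq0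
  have hqM : (q:ℝ) ^ M ≠ 0 := pow_ne_zero _ hq0
  have hqS1 : (q:ℝ) ^ (S-1) ≠ 0 := pow_ne_zero _ hq0
  have hqSM : (q:ℝ) ^ ((S:ℤ) - (M:ℤ)) = q ^ S * (q ^ M)⁻¹ := by
    rw [zpow_sub₀ hq0, zpow_natCast, zpow_natCast, div_eq_mul_inv]
  have hqS : (q:ℝ) ^ S = q ^ (S-1) * q := by
    conv_lhs => rw [← hSS1]
    rw [pow_succ]
  have hy1d : y1 = (q ^ M)⁻¹ * z := by
    rw [hy1def, zpow_neg, zpow_natCast]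
  have hx1d : x1 = q * ((q ^ M)⁻¹ * z) := by rw [hx1y1, hy1d]
  rw [hy1d] at h1y
  rw [hx1d] at hfac
  rw [hshiftS, hshiftS1, hsplit, hqSM, inv_pow, inv_pow, hqS, pow_succ, hy1d, hx1d]
  exact key q z (q ^ (S-1)) (q ^ M) (q ^ (A a)) (q ^ T)
    (qPoch q (q * ((q ^ M)⁻¹ * z)) (S-1)) hq0 hz hqS1 hqM h1q h1qi
    (by rw [hx1d] at hPS1; exact hPS1) hfac h1y hden2
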